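/- For fixed positive weights w_u and rates R_{ub} > 0, the function f(S) = Σ_{b∈B} Σ_{u∈U} S_{ub} w_u log(w_u R_{ub} / (Σ_{k∈U} S_{kb} w_k)) is concave on the domain {S : 0 ≤ S_{ub} ≤ 1, Σ_b S_{ub} = 1 for all u, and Σ_k S_{kb} w_k > 0 for all b}. -/

import Mathlib

open Finset

private lemma concaveOn_sum' {E : Type*} [AddCommGroup E] [Module ℝ E]
    {s : Set E} {ι : Type*} (t : Finset ι) (f : ι → E → ℝ) (hs : Convex ℝ s)
    (hf : ∀ i ∈ t, ConcaveOn ℝ s (f i)) :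
    ConcaveOn ℝ s (fun x => ∑ i ∈ t, f i x) := by
  classical
  induction t using Finset.induction_on with
  | empty => simpa using ⟨hs, by intro x hx y hy a b ha hb hab; simp⟩
  | insert i t hnotmem ih =>
    simp only [Finset.sum_insert hnotmem]
    exact (hf i (Finset.mem_insert_self i t)).add
      (ih fun j hj => hf j (Finset.mem_insert_of_mem hj))

/-- Proposition 3: the relaxed UE-association objective
`f(S) = Σ_b Σ_u S_{ub} w_u log(w_u R_{ub} / Σ_k S_{kb} w_k)` is concave on the
relaxed feasible set. -/
theorem relaxed_association_concave
    {U B : Type*} [Fintype U] [Fintype B]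
    (w : U → ℝ) (R : U → B → ℝ)
    (hw : ∀ u, 0 < w u) (hR : ∀ u b, 0 < R u b) :
    ConcaveOn ℝ
      {S : U → B → ℝ | (∀ u b, 0 ≤ S u b ∧ S u b ≤ 1) ∧
        (∀ u, ∑ b, S u b = 1) ∧ (∀ b, 0 < ∑ k, S k b * w k)}
      (fun S => ∑ b, ∑ u, S u b * w u *
        Real.log (w u * R u b / ∑ k, S k b * w k)) := by
  classical
  set s : Set (U → B → ℝ) := {S : U → B → ℝ | (∀ u b, 0 ≤ S u b ∧ S u b ≤ 1) ∧
        (∀ u, ∑ b, S u b = 1) ∧ (∀ b, 0 < ∑ k, S k b * w k)} with hs_def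
  have hconv : Convex ℝ s := by
    intro x hx y hy a b ha hb hab
    obtain ⟨hx1, hx2, hx3⟩ := hx
    obtain ⟨hy1, hy2, hy3⟩ := hy
    refine ⟨?_, ?_, ?_⟩
    · intro u b'
      have h1 := hx1 u b'; have h2 := hy1 u b'
      constructor
      · simpa using add_nonneg (mul_nonneg ha h1.1) (mul_nonneg hb h2.1)
      · have : a * x u b' + b * y u b' ≤ a * 1 + b * 1 := by
          gcongr; exact h1.2; exact h2.2
        simpa [hab] using this.trans_eq (by rw [mul_one, mul_one, hab])
    · intro u
      have : ∑ b', (a * x u b' + b * y u b') = a * 1 + b * 1 := by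
        rw [Finset.sum_add_distrib, ← Finset.mul_sum, ← Finset.mul_sum, hx2 u, hy2 u]
      simpa [hab] using this.trans (by rw [mul_one, mul_one, hab])
    · intro b'
      have hx' := hx3 b'; have hy' := hy3 b'
      have : ∑ k, (a * x k b' + b * y k b') * w k
          = a * (∑ k, x k b' * w k) + b * (∑ k, y k b' * w k) := by
        rw [Finset.mul_sum, Finset.mul_sum, ← Finset.sum_add_distrib]
        congr 1; ext k; ring
      simp only [Pi.add_apply, Pi.smul_apply, smul_eq_mul]
      rw [this]
      rcases eq_or_lt_of_le ha with h | h
      · have hb1 : b = 1 := by linarith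
        simp [← h, hb1, hy']
      · have := mul_pos h hx'
        nlinarith [mul_nonneg hb hy'.le]
  -- linear maps
  let T : B → ((U → B → ℝ) →ₗ[ℝ] ℝ) := fun b0 =>
    { toFun := fun S => ∑ k, S k b0 * w k
      map_add' := by intro S1 S2; simp [add_mul, Finset.sum_add_distrib]
      map_smul' := by intro c S; simp [Finset.mul_sum, mul_assoc]
      }
  have hTb : ∀ b0, ∀ S ∈ s, (0:ℝ) < T b0 S := fun b0 S hS => hS.2.2 b0
  -- concave pieces
  have hpiece : ∀ b0 : B, ConcaveOn ℝ s (fun S => -(T b0 S * Real.log (T b0 S))) := by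
    intro b0
    have hc : ConcaveOn ℝ ((T b0) ⁻¹' Set.Ici (0:ℝ))
        ((fun x : ℝ => -(x * Real.log x)) ∘ (T b0)) :=
      (Real.convexOn_mul_log.neg).comp_linearMap (T b0)
    exact (hc.subset (fun S hS => le_of_lt (hTb b0 S hS)) hconv)
  -- linear part
  have hlin : ConcaveOn ℝ s (fun S : U → B → ℝ =>
      ∑ b0, ∑ u, S u b0 * (w u * Real.log (w u * R u b0))) := by
    refine ⟨hconv, fun x hx y hy a b ha hb hab => le_of_eq ?_⟩
    simp only [Pi.add_apply, Pi.smul_apply, smul_eq_mul]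
    rw [Finset.mul_sum, Finset.mul_sum, ← Finset.sum_add_distrib]
    congr 1; ext b0
    rw [Finset.mul_sum, Finset.mul_sum, ← Finset.sum_add_distrib]
    congr 1; ext u; ring
  have hg : ConcaveOn ℝ s (fun S : U → B → ℝ =>
      (∑ b0, ∑ u, S u b0 * (w u * Real.log (w u * R u b0))) +
      ∑ b0, -(T b0 S * Real.log (T b0 S))) :=
    hlin.add (concaveOn_sum' Finset.univ _ hconv (fun b0 _ => hpiece b0))
  refine hg.congr ?_
  intro S hS
  have hT : ∀ b0, (0:ℝ) < ∑ k, S k b0 * w k := hS.2.2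
  simp only
  rw [← Finset.sum_add_distrib]
  congr 1; ext b0
  have hTpos := hT b0
  have : ∀ u, S u b0 * (w u * Real.log (w u * R u b0)) =
      S u b0 * w u * Real.log (w u * R u b0) := fun u => by ring
  calc (∑ u, S u b0 * (w u * Real.log (w u * R u b0))) +
        -(T b0 S * Real.log (T b0 S))
      = ∑ u, (S u b0 * w u * Real.log (w u * R u b0)
          - S u b0 * w u * Real.log (∑ k, S k b0 * w k)) := by
        rw [Finset.sum_sub_distrib]
        have hTS : T b0 S = ∑ k, S k b0 * w k := rfl
        rw [hTS]
        have : ∑ u, S u b0 * w u * Real.log (∑ k, S k b0 * w k)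
            = (∑ k, S k b0 * w k) * Real.log (∑ k, S k b0 * w k) := by
          rw [Finset.sum_mul]
        rw [this]
        congr 1
        exact Finset.sum_congr rfl fun u _ => by ring
    _ = ∑ u, S u b0 * w u * Real.log (w u * R u b0 / ∑ k, S k b0 * w k) := by
        refine Finset.sum_congr rfl fun u _ => ?_
        rw [Real.log_div (mul_pos (hw u) (hR u b0)).ne' (ne_of_gt hTpos)]
        ring
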